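/- Suppose ρ_K < 0. If f ∈ F_K is not in the convex hull conv(Yφ̃_X) = {Σ_i p_i y_i φ̃_{x_i} : p ∈ Δ_n}, then ‖f‖_K > |ρ_K|. Equivalently, the closed ball of radius |ρ_K| in F_K is contained in conv(Yφ̃_X). -/

import Mathlib

open scoped RealInnerProductSpace

theorem stmt10 (n : ℕ) [NeZero n] {H : Type*} [NormedAddCommGroup H] [InnerProductSpace ℝ H]
    [CompleteSpace H]
    (v : Fin n → H) (hv : ∀ i, ‖v i‖ = 1)
    (ρ : ℝ)
    (hρ : ρ = ⨆ f : {f : H // ‖f‖ = 1},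
      ⨅ p : stdSimplex ℝ (Fin n), ⟪(f : H), ∑ i, (p : Fin n → ℝ) i • v i⟫)
    (hneg : ρ < 0) :
    ∀ f : H, ‖f‖ ≤ |ρ| → ∃ p ∈ stdSimplex ℝ (Fin n), f = ∑ i, p i • v i := by
  intro f hf
  by_contra hcon
  push_neg at hcon
  -- the linear map
  set L : (Fin n → ℝ) →ₗ[ℝ] H := ∑ i, (LinearMap.proj i).smulRight (v i) with hL
  have hLapp : ∀ p : Fin n → ℝ, L p = ∑ i, p i • v i := by
    intro p
    simp [hL, LinearMap.sum_apply]
  set C : Set H := L '' stdSimplex ℝ (Fin n) with hC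
  have hCne : C.Nonempty := ⟨L (Pi.single 0 1), ⟨_, single_mem_stdSimplex ℝ 0, rfl⟩⟩
  have hCcompact : IsCompact C := (isCompact_stdSimplex ℝ _).image L.continuous_of_finiteDimensional
  have hCconvex : Convex ℝ C := (convex_stdSimplex ℝ _).linear_image L
  have hfC : f ∉ C := by
    rintro ⟨p, hp, rfl⟩
    exact hcon p hp (hLapp p)
  -- norm bound on C
  have hnormC : ∀ c ∈ C, ‖c‖ ≤ 1 := by
    rintro _ ⟨p, hp, rfl⟩
    rw [hLapp]
    calc ‖∑ i, p i • v i‖ ≤ ∑ i, ‖p i • v i‖ := norm_sum_le _ _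
      _ = ∑ i, p i := by
          refine Finset.sum_congr rfl fun i _ => ?_
          rw [norm_smul, hv i, mul_one, Real.norm_eq_abs, abs_of_nonneg (hp.1 i)]
      _ = 1 := hp.2
  -- projection
  obtain ⟨c₀, hc₀C, hc₀⟩ := exists_norm_eq_iInf_of_complete_convex hCne
    hCcompact.isClosed.isComplete hCconvex f
  rw [norm_eq_iInf_iff_real_inner_le_zero hCconvex hc₀C] at hc₀
  have hd : 0 < ‖c₀ - f‖ := by
    rw [norm_pos_iff, sub_ne_zero]
    rintro rfl; exact hfC hc₀C
  set d : ℝ := ‖c₀ - f‖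
  set u : H := (d⁻¹ : ℝ) • (c₀ - f) with hu
  have hunorm : ‖u‖ = 1 := by
    rw [hu, norm_smul, Real.norm_eq_abs, abs_of_nonneg (inv_nonneg.2 hd.le),
      inv_mul_cancel₀ hd.ne']
  -- key lower bound on inner products with C
  have hkey : ∀ c ∈ C, ρ + d ≤ ⟪u, c⟫ := by
    intro c hc
    have h1 : (0:ℝ) ≤ ⟪u, c - c₀⟫ := by
      rw [hu, real_inner_smul_left]
      have : ⟪c₀ - f, c - c₀⟫ = -⟪f - c₀, c - c₀⟫ := by
        rw [← neg_sub f c₀, inner_neg_left]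
      rw [this]
      exact mul_nonneg (inv_nonneg.2 hd.le) (neg_nonneg.2 (hc₀ c hc))
    have h2 : ⟪u, c₀ - f⟫ = d := by
      rw [hu, real_inner_smul_left, real_inner_self_eq_norm_sq]
      field_simp
      ring
    have h3 : ρ ≤ ⟪u, f⟫ := by
      have := abs_real_inner_le_norm u f
      rw [hunorm, one_mul] at this
      have h4 : -‖f‖ ≤ ⟪u, f⟫ := (abs_le.1 this).1
      have : -‖f‖ ≥ ρ := by
        rw [abs_of_neg hneg] at hf; linarith
      linarith
    have hsum : ⟪u, c⟫ = ⟪u, f⟫ + ⟪u, c₀ - f⟫ + ⟪u, c - c₀⟫ := by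
      rw [← inner_add_right, ← inner_add_right]
      congr 1
      abel
    linarith
  -- the family g
  have hnorm1 : ∀ p : stdSimplex ℝ (Fin n), ‖∑ i, (p : Fin n → ℝ) i • v i‖ ≤ 1 := by
    intro p
    rw [← hLapp]
    exact hnormC _ ⟨p, p.2, rfl⟩
  have habs : ∀ (g : {f : H // ‖f‖ = 1}) (p : stdSimplex ℝ (Fin n)),
      |⟪(g : H), ∑ i, (p : Fin n → ℝ) i • v i⟫| ≤ 1 := by
    intro g p
    calc |⟪(g : H), ∑ i, (p : Fin n → ℝ) i • v i⟫|
        ≤ ‖(g : H)‖ * ‖∑ i, (p : Fin n → ℝ) i • v i‖ := abs_real_inner_le_norm _ _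
      _ ≤ 1 := by rw [g.2, one_mul]; exact hnorm1 p
  have hbddAbove : BddAbove (Set.range fun f : {f : H // ‖f‖ = 1} =>
      ⨅ p : stdSimplex ℝ (Fin n), ⟪(f : H), ∑ i, (p : Fin n → ℝ) i • v i⟫) := by
    refine ⟨1, ?_⟩
    rintro _ ⟨g, rfl⟩
    have hbb : BddBelow (Set.range fun p : stdSimplex ℝ (Fin n) =>
        ⟪(g : H), ∑ i, (p : Fin n → ℝ) i • v i⟫) := by
      refine ⟨-1, ?_⟩
      rintro _ ⟨p, rfl⟩
      exact (abs_le.1 (habs g p)).1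
    refine (ciInf_le hbb (⟨_, single_mem_stdSimplex ℝ 0⟩ : stdSimplex ℝ (Fin n))).trans ?_
    exact (abs_le.1 (habs g _)).2
  have hgu : ρ + d ≤ ⨅ p : stdSimplex ℝ (Fin n), ⟪u, ∑ i, (p : Fin n → ℝ) i • v i⟫ := by
    have hne : Nonempty (stdSimplex ℝ (Fin n)) := ⟨⟨_, single_mem_stdSimplex ℝ 0⟩⟩
    exact le_ciInf fun p => hkey _ ⟨p, p.2, hLapp _⟩
  have hle : (⨅ p : stdSimplex ℝ (Fin n), ⟪u, ∑ i, (p : Fin n → ℝ) i • v i⟫) ≤ ρ := by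
    rw [hρ]
    exact le_ciSup hbddAbove (⟨u, hunorm⟩ : {f : H // ‖f‖ = 1})
  linarith
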